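/- Let R ∈ ℝ^{n×n} be an upper triangular matrix with nonzero diagonal entries r_{jj} (e.g., the R-factor of the QR factorization of a full column rank matrix, or the Cholesky factor of a symmetric positive definite matrix). Then for every i = 1, 2, …, n: min_{1 ≤ j ≤ n} |r_{jj}| ≤ λ_i(R) ≤ max_{1 ≤ j ≤ i} ‖R_{1:j, j}‖₂, where R_{1:j, j} denotes the vector formed by the first j entries of the j-th column of R. -/

import Mathlib

open Matrix

noncomputable section

/-- Euclidean norm of a real vector. -/
def euclNorm {m : ℕ} (x : Fin m → ℝ) : ℝ := Real.sqrt (∑ k, x k ^ 2)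

/-- The lattice vector `A z` for an integer vector `z`. -/
def latticeVec {m n : ℕ} (A : Matrix (Fin m) (Fin n) ℝ) (z : Fin n → ℤ) : Fin m → ℝ :=
  A.mulVec fun k => (z k : ℝ)

/-- The `i`-th successive minimum of the lattice generated by `A`: the smallest `r ≥ 0` such
that the closed ball of radius `r` centered at the origin contains `i` linearly independent
lattice vectors. -/
def succMin {m n : ℕ} (A : Matrix (Fin m) (Fin n) ℝ) (i : ℕ) : ℝ :=
  sInf {r : ℝ | 0 ≤ r ∧ ∃ v : Fin i → (Fin n → ℤ),
    LinearIndependent ℝ (fun j => latticeVec A (v j)) ∧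
    ∀ j, euclNorm (latticeVec A (v j)) ≤ r}

/-- `R` is the Cholesky factor of `G`: `R` is upper triangular with positive diagonal
entries and `Rᵀ * R = G`. -/
def IsCholesky {n : ℕ} (G R : Matrix (Fin n) (Fin n) ℝ) : Prop :=
  R.BlockTriangular id ∧ (∀ j, 0 < R j j) ∧ Rᵀ * R = G

theorem statement8 {n : ℕ} (R : Matrix (Fin n) (Fin n) ℝ)
    (hR : R.BlockTriangular id) (hdiag : ∀ j, R j j ≠ 0) :
    ∀ i : ℕ, 1 ≤ i → i ≤ n →
      sInf (Set.range fun j : Fin n => |R j j|) ≤ succMin R i ∧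
      succMin R i ≤
        sSup {x : ℝ | ∃ j : Fin n, (j : ℕ) < i ∧
          x = Real.sqrt (∑ k : Fin n, if (k : ℕ) ≤ (j : ℕ) then R k j ^ 2 else 0)} := by
  intro i hi1 hin
  classical
  -- Invertibility of R
  have hdet : R.det ≠ 0 := by
    rw [Matrix.det_of_upperTriangular hR]
    exact Finset.prod_ne_zero_iff.mpr fun j _ => hdiag j
  have hinj : Function.Injective R.mulVecLin := by
    have : Function.Injective (R.mulVec ·) := by
      rw [Matrix.mulVec_injective_iff_isUnit, Matrix.isUnit_iff_isUnit_det]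
      exact isUnit_iff_ne_zero.mpr hdet
    exact this
  set emb : Fin i → Fin n := Fin.castLE hin with hemb
  set v : Fin i → Fin n → ℤ := fun j k => if k = emb j then 1 else 0 with hv
  have hlv : ∀ j, latticeVec R (v j) = R.mulVecLin (Pi.single (emb j) 1) := by
    intro j
    funext k
    simp only [latticeVec, hv, Matrix.mulVecLin_apply, Matrix.mulVec, dotProduct]
    refine Finset.sum_congr rfl fun x _ => ?_
    by_cases h : x = emb j <;> simp [h, Pi.single_apply]
  -- linear independence of the chosen columns
  have hli : LinearIndependent ℝ (fun j => latticeVec R (v j)) := by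
    have h1 : LinearIndependent ℝ
        (fun j : Fin i => (Pi.single (emb j) 1 : Fin n → ℝ)) := by
      have hb := (Pi.basisFun ℝ (Fin n)).linearIndependent
      have h2 := hb.comp emb (Fin.castLE_injective hin)
      have : (⇑(Pi.basisFun ℝ (Fin n)) ∘ emb) = fun j : Fin i => (Pi.single (emb j) 1 : Fin n → ℝ) := by
        funext j; simp [Function.comp]
      rwa [this] at h2
    have := h1.map' R.mulVecLin (LinearMap.ker_eq_bot.mpr hinj)
    convert this using 1
    funext j
    exact (hlv j).trans rfl
    all_goals rfl
  -- the set in the sSup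
  set T : Set ℝ := {x : ℝ | ∃ j : Fin n, (j : ℕ) < i ∧
      x = Real.sqrt (∑ k : Fin n, if (k : ℕ) ≤ (j : ℕ) then R k j ^ 2 else 0)} with hT
  have hTfin : T.Finite := by
    have : T ⊆ (fun j : Fin n =>
        Real.sqrt (∑ k : Fin n, if (k : ℕ) ≤ (j : ℕ) then R k j ^ 2 else 0)) '' Set.univ := by
      rintro x ⟨j, -, rfl⟩
      exact ⟨j, trivial, rfl⟩
    exact Set.Finite.subset ((Set.finite_univ).image _) this
  have hTbdd : BddAbove T := hTfin.bddAbove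
  -- each chosen column's norm is in T
  have hnormT : ∀ j : Fin i, euclNorm (latticeVec R (v j)) ∈ T := by
    intro j
    refine ⟨emb j, by simp [hemb, j.isLt], ?_⟩
    rw [hlv j]
    unfold euclNorm
    congr 1
    refine Finset.sum_congr rfl fun k _ => ?_
    by_cases hk : (k : ℕ) ≤ ((emb j : Fin n) : ℕ)
    · simp [hk, Matrix.mulVecLin_apply, Matrix.mulVec_single]
    · have hlt : (emb j : Fin n) < k := by
        exact Fin.lt_def.mpr (lt_of_not_ge hk)
      have := hR (show (id (emb j) : Fin n) < id k from hlt)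
      simp [hk, Matrix.mulVecLin_apply, Matrix.mulVec_single, this]
  have hnormle : ∀ j : Fin i, euclNorm (latticeVec R (v j)) ≤ sSup T :=
    fun j => le_csSup hTbdd (hnormT j)
  have hSupnn : 0 ≤ sSup T := by
    refine le_trans ?_ (hnormle ⟨0, hi1⟩)
    unfold euclNorm
    exact Real.sqrt_nonneg _
  -- the succMin set
  set S : Set ℝ := {r : ℝ | 0 ≤ r ∧ ∃ v : Fin i → (Fin n → ℤ),
      LinearIndependent ℝ (fun j => latticeVec R (v j)) ∧
      ∀ j, euclNorm (latticeVec R (v j)) ≤ r} with hS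
  have hmem : sSup T ∈ S := ⟨hSupnn, v, hli, hnormle⟩
  have hSbdd : BddBelow S := ⟨0, fun r hr => hr.1⟩
  constructor
  · -- lower bound
    refine le_csInf ⟨_, hmem⟩ ?_
    rintro r ⟨hr0, w, hwli, hwle⟩
    -- the first vector is nonzero
    set z : Fin n → ℤ := w ⟨0, hi1⟩ with hz
    have hne : latticeVec R z ≠ 0 := hwli.ne_zero ⟨0, hi1⟩
    have hz0 : z ≠ 0 := by
      intro h0
      apply hne
      funext k
      simp [latticeVec, Matrix.mulVec, dotProduct, h0]
    obtain ⟨k0, hk0'⟩ := Function.ne_iff.mp hz0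
    have hk0 : z k0 ≠ 0 := by simpa using hk0'
    set s : Finset (Fin n) := Finset.univ.filter (fun k => z k ≠ 0) with hs
    have hsne : s.Nonempty := ⟨k0, by simp [hs, hk0]⟩
    set j : Fin n := s.max' hsne with hj
    have hzj : z j ≠ 0 := by
      have := s.max'_mem hsne
      simpa [hs] using this
    have hzero : ∀ k, j < k → z k = 0 := by
      intro k hk
      by_contra h
      have : k ∈ s := by simp [hs, h]
      exact absurd (s.le_max' k this) (not_le.mpr hk)
    have hval : latticeVec R z j = R j j * (z j : ℝ) := by
      simp only [latticeVec, Matrix.mulVec, dotProduct]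
      rw [Finset.sum_eq_single j]
      · intro k _ hkj
        rcases lt_or_gt_of_ne hkj with h | h
        · have := hR (show (id k : Fin n) < id j from h)
          simp [this]
        · simp [hzero k h]
      · simp
    have h1 : |R j j| ≤ euclNorm (latticeVec R z) := by
      have habs : |R j j| ≤ |latticeVec R z j| := by
        rw [hval, abs_mul]
        have : (1 : ℝ) ≤ |(z j : ℝ)| := by
          rw [← Int.cast_abs]
          exact_mod_cast Int.one_le_abs hzj
        nlinarith [abs_nonneg (R j j)]
      refine le_trans habs ?_
      unfold euclNorm
      rw [← Real.sqrt_sq_eq_abs]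
      apply Real.sqrt_le_sqrt
      exact Finset.single_le_sum (f := fun k => latticeVec R z k ^ 2)
        (fun k _ => sq_nonneg _) (Finset.mem_univ j)
    calc sInf (Set.range fun j : Fin n => |R j j|) ≤ |R j j| :=
          csInf_le (Set.finite_range _).bddBelow ⟨j, rfl⟩
      _ ≤ euclNorm (latticeVec R z) := h1
      _ ≤ r := hwle ⟨0, hi1⟩
  · -- upper bound
    exact csInf_le hSbdd hmem
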